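/- Suppose in addition that, with K = ⌈(n'−1)/3⌉, the landmarks satisfy: (a) for every 1 ≤ k ≤ K, p'_{k+1} − p'_k ≤ 2ε and p'_{n'−k+1} − p'_{n'−k} ≤ 2ε; and (b) p'_{K+1} ≤ (2K+1)·ε and p'_{n'−K} ≥ 1 − (2K+1)·ε. Then (1/81)·(n'−1)·(n+n')/ε ≤ M ≤ 2·(n'−1)·(n+n')/ε. -/

import Mathlib

/- STATEMENT 18: If with K = ⌈(n'−1)/3⌉ the landmarks satisfy the spacing conditions
(a) and (b), then (1/81)·(n'−1)(n+n')/ε ≤ M ≤ 2·(n'−1)(n+n')/ε. -/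
set_option maxHeartbeats 1000000
theorem stmt_18
    (n' n : ℕ) (hn' : 10 ≤ n') (hn : 2 ≤ n)
    (p' : ℕ → ℝ)
    (hp'0 : 0 ≤ p' 1) (hp'1 : p' n' ≤ 1)
    (hp'mono : ∀ k ∈ Finset.Ico 1 n', p' k < p' (k + 1))
    (ε : ℝ)
    (hε : IsLeast {x : ℝ | ∃ k, 1 ≤ k ∧ k < n' ∧ x = p' (k + 1) - p' k} ε)
    (p : ℕ → ℝ)
    (hp01 : ∀ i ∈ Finset.Icc 1 n, 0 ≤ p i ∧ p i ≤ 1)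
    (hpmono : ∀ i ∈ Finset.Ico 1 n, p i ≤ p (i + 1))
    (b r : ℕ → ℝ)
    (hb : ∀ k, b k = ∑ ℓ ∈ Finset.Ico 1 k, (2 - (p' (ℓ + 1) + p' ℓ)) / (p' (ℓ + 1) - p' ℓ))
    (hr : ∀ k, r k = ∑ ℓ ∈ Finset.Ico k n', (p' (ℓ + 1) + p' ℓ) / (p' (ℓ + 1) - p' ℓ))
    (φ : ℕ → ℕ)
    (hφmem : ∀ i ∈ Finset.Icc 1 n, φ i ∈ Finset.Icc 1 n')
    (hφmax : ∀ i ∈ Finset.Icc 1 n, ∀ k ∈ Finset.Icc 1 n',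
        p i * b k + (1 - p i) * r k ≤ p i * b (φ i) + (1 - p i) * r (φ i))
    (R B M : ℝ)
    (hR : R = ∑ k ∈ Finset.Icc 1 n',
        ((((Finset.Icc 1 n).filter (fun i => φ i = k)).card : ℝ) + 1) * r k)
    (hB : B = ∑ k ∈ Finset.Icc 1 n',
        ((((Finset.Icc 1 n).filter (fun i => φ i = k)).card : ℝ) + 1) * b k)
    (hM : M = max R B)
    (K : ℕ) (hK : K = ⌈((n' : ℝ) - 1) / 3⌉₊)
    (ha : ∀ k, 1 ≤ k → k ≤ K →
        p' (k + 1) - p' k ≤ 2 * ε ∧ p' (n' - k + 1) - p' (n' - k) ≤ 2 * ε)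
    (hb1 : p' (K + 1) ≤ (2 * (K : ℝ) + 1) * ε)
    (hb2 : 1 - (2 * (K : ℝ) + 1) * ε ≤ p' (n' - K)) :
    1 / 81 * ((n' : ℝ) - 1) * ((n : ℝ) + (n' : ℝ)) / ε ≤ M ∧
      M ≤ 2 * ((n' : ℝ) - 1) * ((n : ℝ) + (n' : ℝ)) / ε := by
  obtain ⟨⟨k0, hk01, hk02, hk0e⟩, hεlb⟩ := hε
  have hn'R : (10 : ℝ) ≤ (n' : ℝ) := by exact_mod_cast hn'
  have hεpos : 0 < ε := by
    have := hp'mono k0 (Finset.mem_Ico.mpr ⟨hk01, hk02⟩)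
    rw [hk0e]; linarith
  have hgap : ∀ ℓ, 1 ≤ ℓ → ℓ < n' → ε ≤ p' (ℓ + 1) - p' ℓ := fun ℓ h1 h2 =>
    hεlb ⟨ℓ, h1, h2, rfl⟩
  have hdpos : ∀ ℓ, 1 ≤ ℓ → ℓ < n' → 0 < p' (ℓ + 1) - p' ℓ := fun ℓ h1 h2 =>
    lt_of_lt_of_le hεpos (hgap ℓ h1 h2)
  -- monotonicity of p' on [1, n']
  have hmono : ∀ i j, 1 ≤ i → i ≤ j → j ≤ n' → p' i ≤ p' j := by
    intro i j h1 hij hjn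
    induction j with
    | zero => omega
    | succ j ih =>
      rcases Nat.lt_or_ge i (j + 1) with h | h
      · have h2 : p' j < p' (j + 1) := hp'mono j (Finset.mem_Ico.mpr ⟨by omega, by omega⟩)
        have h3 : p' i ≤ p' j := ih (by omega) (by omega)
        linarith
      · have : i = j + 1 := by omega
        rw [this]
  have hp'nn : ∀ ℓ, 1 ≤ ℓ → ℓ ≤ n' → 0 ≤ p' ℓ := fun ℓ h1 h2 =>
    hp'0.trans (hmono 1 ℓ le_rfl h1 h2)
  have hp'le1 : ∀ ℓ, 1 ≤ ℓ → ℓ ≤ n' → p' ℓ ≤ 1 := fun ℓ h1 h2 =>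
    (hmono ℓ n' h1 h2 le_rfl).trans hp'1
  -- ε ≤ 1/(n'-1)
  have htel : ∑ ℓ ∈ Finset.Ico 1 n', (p' (ℓ + 1) - p' ℓ) = p' n' - p' 1 := by
    rw [Finset.sum_Ico_eq_sub _ (by omega : 1 ≤ n'), Finset.sum_range_sub,
      Finset.sum_range_sub]
    ring
  have hεN : ((n' : ℝ) - 1) * ε ≤ 1 := by
    have h1 := Finset.card_nsmul_le_sum (Finset.Ico 1 n') (fun ℓ => p' (ℓ + 1) - p' ℓ) ε
      (fun ℓ hℓ => hgap ℓ (Finset.mem_Ico.mp hℓ).1 (Finset.mem_Ico.mp hℓ).2)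
    rw [htel, Nat.card_Ico, nsmul_eq_mul] at h1
    have hc : ((n' - 1 : ℕ) : ℝ) = (n' : ℝ) - 1 := by
      rw [Nat.cast_sub (by omega)]; norm_num
    rw [hc] at h1
    have := hp'nn 1 le_rfl (by omega)
    linarith
  -- K bounds
  have hKlbR : ((n' : ℝ) - 1) / 3 ≤ (K : ℝ) := by rw [hK]; exact Nat.le_ceil _
  have hKubR : (K : ℝ) < ((n' : ℝ) - 1) / 3 + 1 := by
    rw [hK]; exact Nat.ceil_lt_add_one (by linarith)
  have h3K : 3 * K ≤ n' + 1 := by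
    have h1 : (3 * K : ℝ) < ((n' : ℝ) + 2) := by linarith
    have h2 : (3 * K : ℕ) < n' + 2 := by exact_mod_cast h1
    omega
  have hK3 : 3 ≤ K := by
    have h1 : (9 : ℝ) ≤ (3 * K : ℝ) := by linarith
    have h2 : (9 : ℕ) ≤ 3 * K := by exact_mod_cast h1
    omega
  have hKn' : K < n' := by omega
  have h3KR : 3 * (K : ℝ) ≤ (n' : ℝ) + 1 := by exact_mod_cast h3K
  -- the quantity C
  set C : ℝ := 1 - (2 * (K : ℝ) + 1) * ε with hCdef
  have hC1 : (n' : ℝ) - 8 ≤ 3 * ((n' : ℝ) - 1) * C := by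
    nlinarith [mul_nonneg (show (0:ℝ) ≤ 2 * (K : ℝ) + 1 by positivity)
      (show (0:ℝ) ≤ 1 - ((n' : ℝ) - 1) * ε by linarith)]
  have hC0 : 0 ≤ C := by
    by_contra h
    push_neg at h
    have : 3 * ((n' : ℝ) - 1) * C < 0 := mul_neg_of_pos_of_neg (by linarith) h
    linarith
  have hKC : 2 / 81 * ((n' : ℝ) - 1) ≤ (K : ℝ) * C := by
    nlinarith [mul_nonneg hC0 (show (0:ℝ) ≤ 3 * (K : ℝ) - ((n' : ℝ) - 1) by linarith)]
  -- term bounds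
  have hrterm_nn : ∀ ℓ, 1 ≤ ℓ → ℓ < n' →
      0 ≤ (p' (ℓ + 1) + p' ℓ) / (p' (ℓ + 1) - p' ℓ) := by
    intro ℓ h1 h2
    apply div_nonneg _ (hdpos ℓ h1 h2).le
    have := hp'nn ℓ h1 (by omega)
    have := hp'nn (ℓ + 1) (by omega) (by omega)
    linarith
  have hbterm_nn : ∀ ℓ, 1 ≤ ℓ → ℓ < n' →
      0 ≤ (2 - (p' (ℓ + 1) + p' ℓ)) / (p' (ℓ + 1) - p' ℓ) := by
    intro ℓ h1 h2
    apply div_nonneg _ (hdpos ℓ h1 h2).le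
    have := hp'le1 ℓ h1 (by omega)
    have := hp'le1 (ℓ + 1) (by omega) (by omega)
    linarith
  have hrterm_ub : ∀ ℓ, 1 ≤ ℓ → ℓ < n' →
      (p' (ℓ + 1) + p' ℓ) / (p' (ℓ + 1) - p' ℓ) ≤ 2 / ε := by
    intro ℓ h1 h2
    apply div_le_div₀ (by norm_num) _ hεpos (hgap ℓ h1 h2)
    have := hp'le1 ℓ h1 (by omega)
    have := hp'le1 (ℓ + 1) (by omega) (by omega)
    linarith
  have hbterm_ub : ∀ ℓ, 1 ≤ ℓ → ℓ < n' →
      (2 - (p' (ℓ + 1) + p' ℓ)) / (p' (ℓ + 1) - p' ℓ) ≤ 2 / ε := by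
    intro ℓ h1 h2
    apply div_le_div₀ (by norm_num) _ hεpos (hgap ℓ h1 h2)
    have := hp'nn ℓ h1 (by omega)
    have := hp'nn (ℓ + 1) (by omega) (by omega)
    linarith
  -- good term lower bounds
  have hgoodr : ∀ ℓ, n' - K ≤ ℓ → ℓ < n' →
      C / ε ≤ (p' (ℓ + 1) + p' ℓ) / (p' (ℓ + 1) - p' ℓ) := by
    intro ℓ hl1 hl2
    have h1le : 1 ≤ ℓ := by omega
    obtain ⟨j, hj1, hjK, hjℓ⟩ : ∃ j, 1 ≤ j ∧ j ≤ K ∧ ℓ = n' - j :=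
      ⟨n' - ℓ, by omega, by omega, by omega⟩
    have hd2 : p' (ℓ + 1) - p' ℓ ≤ 2 * ε := by
      have hd := (ha j hj1 hjK).2
      have he1 : n' - j + 1 = ℓ + 1 := by omega
      rw [hjℓ, ← hjℓ, ← he1, hjℓ]
      exact hd
    have hs : 2 * C ≤ p' (ℓ + 1) + p' ℓ := by
      have h1 : p' (n' - K) ≤ p' ℓ := hmono (n' - K) ℓ (by omega) (by omega) (by omega)
      have h2 : p' ℓ < p' (ℓ + 1) := hp'mono ℓ (Finset.mem_Ico.mpr ⟨h1le, hl2⟩)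
      simp only [hCdef]
      linarith
    have hsnn : 0 ≤ p' (ℓ + 1) + p' ℓ := by linarith
    calc C / ε = (2 * C) / (2 * ε) := (mul_div_mul_left C ε two_ne_zero).symm
      _ ≤ _ := div_le_div₀ hsnn hs (hdpos ℓ h1le hl2) hd2
  have hgoodb : ∀ ℓ, 1 ≤ ℓ → ℓ ≤ K →
      C / ε ≤ (2 - (p' (ℓ + 1) + p' ℓ)) / (p' (ℓ + 1) - p' ℓ) := by
    intro ℓ h1 hK2
    have hl2 : ℓ < n' := by omega
    have hd2 : p' (ℓ + 1) - p' ℓ ≤ 2 * ε := (ha ℓ h1 hK2).1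
    have hs : 2 * C ≤ 2 - (p' (ℓ + 1) + p' ℓ) := by
      have h2 : p' (ℓ + 1) ≤ p' (K + 1) := hmono (ℓ + 1) (K + 1) (by omega) (by omega) (by omega)
      have h3 : p' ℓ < p' (ℓ + 1) := hp'mono ℓ (Finset.mem_Ico.mpr ⟨h1, hl2⟩)
      simp only [hCdef]
      linarith
    have hsnn : 0 ≤ 2 - (p' (ℓ + 1) + p' ℓ) := by linarith
    calc C / ε = (2 * C) / (2 * ε) := (mul_div_mul_left C ε two_ne_zero).symm
      _ ≤ _ := div_le_div₀ hsnn hs (hdpos ℓ h1 hl2) hd2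
  -- upper bounds on r k, b k
  have hQ : (0 : ℝ) ≤ 2 / ε := by positivity
  have hrk_ub : ∀ k, 1 ≤ k → r k ≤ ((n' : ℝ) - 1) * (2 / ε) := by
    intro k hk1
    rw [hr]
    calc ∑ ℓ ∈ Finset.Ico k n', (p' (ℓ + 1) + p' ℓ) / (p' (ℓ + 1) - p' ℓ)
        ≤ ∑ ℓ ∈ Finset.Ico k n', (2 / ε) := by
          apply Finset.sum_le_sum
          intro ℓ hℓ
          have hm := Finset.mem_Ico.mp hℓ
          exact hrterm_ub ℓ (le_trans hk1 hm.1) hm.2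
      _ = ((n' - k : ℕ) : ℝ) * (2 / ε) := by
          rw [Finset.sum_const, Nat.card_Ico, nsmul_eq_mul]
      _ ≤ ((n' : ℝ) - 1) * (2 / ε) := by
          apply mul_le_mul_of_nonneg_right _ hQ
          have h1 : ((n' - k : ℕ) : ℝ) ≤ ((n' - 1 : ℕ) : ℝ) := by
            exact_mod_cast Nat.sub_le_sub_left hk1 n'
          have hc : ((n' - 1 : ℕ) : ℝ) = (n' : ℝ) - 1 := by
            rw [Nat.cast_sub (by omega)]; norm_num
          linarith
  have hbk_ub : ∀ k, k ≤ n' → b k ≤ ((n' : ℝ) - 1) * (2 / ε) := by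
    intro k hk1
    rw [hb]
    calc ∑ ℓ ∈ Finset.Ico 1 k, (2 - (p' (ℓ + 1) + p' ℓ)) / (p' (ℓ + 1) - p' ℓ)
        ≤ ∑ ℓ ∈ Finset.Ico 1 k, (2 / ε) := by
          apply Finset.sum_le_sum
          intro ℓ hℓ
          have hm := Finset.mem_Ico.mp hℓ
          exact hbterm_ub ℓ hm.1 (by omega)
      _ = ((k - 1 : ℕ) : ℝ) * (2 / ε) := by
          rw [Finset.sum_const, Nat.card_Ico, nsmul_eq_mul]
      _ ≤ ((n' : ℝ) - 1) * (2 / ε) := by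
          apply mul_le_mul_of_nonneg_right _ hQ
          have h1 : ((k - 1 : ℕ) : ℝ) ≤ ((n' - 1 : ℕ) : ℝ) := by
            exact_mod_cast Nat.sub_le_sub_right hk1 1
          have hc : ((n' - 1 : ℕ) : ℝ) = (n' : ℝ) - 1 := by
            rw [Nat.cast_sub (by omega)]; norm_num
          linarith
  -- nonnegativity of r k, b k
  have hrk_nn : ∀ k, 1 ≤ k → 0 ≤ r k := by
    intro k hk1
    rw [hr]
    apply Finset.sum_nonneg
    intro ℓ hℓ
    have hm := Finset.mem_Ico.mp hℓ
    exact hrterm_nn ℓ (le_trans hk1 hm.1) hm.2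
  have hbk_nn : ∀ k, k ≤ n' → 0 ≤ b k := by
    intro k hk1
    rw [hb]
    apply Finset.sum_nonneg
    intro ℓ hℓ
    have hm := Finset.mem_Ico.mp hℓ
    exact hbterm_nn ℓ hm.1 (by omega)
  -- lower bound for b k + r k
  have hlow : ∀ k, 1 ≤ k → k ≤ n' → 2 / 81 * ((n' : ℝ) - 1) / ε ≤ r k + b k := by
    intro k hk1 hk2
    have hKterm : (K : ℝ) * (C / ε) ≤ r k + b k := by
      rcases le_or_gt k K with hcase | hcase
      · -- use r
        have hsub : Finset.Ico (n' - K) n' ⊆ Finset.Ico k n' :=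
          Finset.Ico_subset_Ico (by omega) le_rfl
        have h1 : ∑ ℓ ∈ Finset.Ico (n' - K) n',
            (p' (ℓ + 1) + p' ℓ) / (p' (ℓ + 1) - p' ℓ) ≤ r k := by
          rw [hr]
          apply Finset.sum_le_sum_of_subset_of_nonneg hsub
          intro ℓ hℓ _
          have hm := Finset.mem_Ico.mp hℓ
          exact hrterm_nn ℓ (le_trans hk1 hm.1) hm.2
        have h2 : (Finset.Ico (n' - K) n').card • (C / ε) ≤
            ∑ ℓ ∈ Finset.Ico (n' - K) n', (p' (ℓ + 1) + p' ℓ) / (p' (ℓ + 1) - p' ℓ) :=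
          Finset.card_nsmul_le_sum _ _ _ (fun ℓ hℓ =>
            hgoodr ℓ (Finset.mem_Ico.mp hℓ).1 (Finset.mem_Ico.mp hℓ).2)
        have hcard : (Finset.Ico (n' - K) n').card = K := by
          rw [Nat.card_Ico]; omega
        rw [hcard, nsmul_eq_mul] at h2
        have := hbk_nn k hk2
        linarith
      · -- use b
        have hsub : Finset.Ico 1 (K + 1) ⊆ Finset.Ico 1 k :=
          Finset.Ico_subset_Ico le_rfl (by omega)
        have h1 : ∑ ℓ ∈ Finset.Ico 1 (K + 1),
            (2 - (p' (ℓ + 1) + p' ℓ)) / (p' (ℓ + 1) - p' ℓ) ≤ b k := by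
          rw [hb]
          apply Finset.sum_le_sum_of_subset_of_nonneg hsub
          intro ℓ hℓ _
          have hm := Finset.mem_Ico.mp hℓ
          exact hbterm_nn ℓ hm.1 (by omega)
        have h2 : (Finset.Ico 1 (K + 1)).card • (C / ε) ≤
            ∑ ℓ ∈ Finset.Ico 1 (K + 1), (2 - (p' (ℓ + 1) + p' ℓ)) / (p' (ℓ + 1) - p' ℓ) :=
          Finset.card_nsmul_le_sum _ _ _ (fun ℓ hℓ =>
            hgoodb ℓ (Finset.mem_Ico.mp hℓ).1 (by
              have := (Finset.mem_Ico.mp hℓ).2; omega))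
        have hcard : (Finset.Ico 1 (K + 1)).card = K := by
          rw [Nat.card_Ico]; omega
        rw [hcard, nsmul_eq_mul] at h2
        have := hrk_nn k hk1
        linarith
    have heq : (K : ℝ) * (C / ε) = ((K : ℝ) * C) / ε := (mul_div_assoc _ _ _).symm
    have h3 : 2 / 81 * ((n' : ℝ) - 1) / ε ≤ ((K : ℝ) * C) / ε :=
      div_le_div_of_nonneg_right hKC hεpos.le
    rw [heq] at hKterm
    linarith
  -- fiber cardinality sum
  have hfib : ∑ k ∈ Finset.Icc 1 n', ((Finset.Icc 1 n).filter (fun i => φ i = k)).card = n := by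
    rw [← Finset.card_eq_sum_card_fiberwise hφmem, Nat.card_Icc]
    omega
  have hA : ∑ k ∈ Finset.Icc 1 n',
      ((((Finset.Icc 1 n).filter (fun i => φ i = k)).card : ℝ) + 1) = (n : ℝ) + (n' : ℝ) := by
    rw [Finset.sum_add_distrib, Finset.sum_const, Nat.card_Icc, ← Nat.cast_sum _ _, hfib]
    simp [Nat.add_sub_cancel]
  -- upper bound
  have hcnn : ∀ k, (0:ℝ) ≤ (((Finset.Icc 1 n).filter (fun i => φ i = k)).card : ℝ) + 1 := by
    intro k; positivity
  have hRub : R ≤ ((n : ℝ) + (n' : ℝ)) * (((n' : ℝ) - 1) * (2 / ε)) := by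
    rw [hR, ← hA, Finset.sum_mul]
    apply Finset.sum_le_sum
    intro k hk
    have hm := Finset.mem_Icc.mp hk
    exact mul_le_mul_of_nonneg_left (hrk_ub k hm.1) (hcnn k)
  have hBub : B ≤ ((n : ℝ) + (n' : ℝ)) * (((n' : ℝ) - 1) * (2 / ε)) := by
    rw [hB, ← hA, Finset.sum_mul]
    apply Finset.sum_le_sum
    intro k hk
    have hm := Finset.mem_Icc.mp hk
    exact mul_le_mul_of_nonneg_left (hbk_ub k hm.2) (hcnn k)
  have hub_eq : ((n : ℝ) + (n' : ℝ)) * (((n' : ℝ) - 1) * (2 / ε)) =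
      2 * ((n' : ℝ) - 1) * ((n : ℝ) + (n' : ℝ)) / ε := by
    field_simp
  -- lower bound
  have hRBsum : R + B = ∑ k ∈ Finset.Icc 1 n',
      ((((Finset.Icc 1 n).filter (fun i => φ i = k)).card : ℝ) + 1) * (r k + b k) := by
    rw [hR, hB, ← Finset.sum_add_distrib]
    apply Finset.sum_congr rfl
    intro k _
    ring
  have hRBlb : ((n : ℝ) + (n' : ℝ)) * (2 / 81 * ((n' : ℝ) - 1) / ε) ≤ R + B := by
    rw [hRBsum, ← hA, Finset.sum_mul]
    apply Finset.sum_le_sum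
    intro k hk
    have hm := Finset.mem_Icc.mp hk
    exact mul_le_mul_of_nonneg_left (hlow k hm.1 hm.2) (hcnn k)
  have hlb_eq : ((n : ℝ) + (n' : ℝ)) * (2 / 81 * ((n' : ℝ) - 1) / ε) =
      2 * (1 / 81 * ((n' : ℝ) - 1) * ((n : ℝ) + (n' : ℝ)) / ε) := by
    field_simp
  have hRM : R ≤ M := hM ▸ le_max_left R B
  have hBM : B ≤ M := hM ▸ le_max_right R B
  constructor
  · linarith
  · rw [hM]
    apply max_le <;> linarith
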